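/- The 1-D Rouy–Tourin dilation step preserves monotonicity: if u : ℤ → ℝ satisfies u_{i−1} ≤ u_i for all i, and v_i = u_i + (τ/h)·max{0, u_{i+1} − u_i, u_{i−1} − u_i} with 0 < τ ≤ h, then v_{i−1} ≤ v_i for all i. -/
import Mathlib

/-- The 1-D Rouy–Tourin dilation step preserves monotonicity. -/
theorem rouy_tourin_preserves_monotonicity (u v : ℤ → ℝ)
    (hmono : ∀ i : ℤ, u (i - 1) ≤ u i)
    (h τ : ℝ) (hh : 0 < h) (hτ : 0 < τ) (hτh : τ ≤ h)
    (hv : ∀ i, v i = u i + (τ / h) * max 0 (max (u (i + 1) - u i) (u (i - 1) - u i))) :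
    ∀ i : ℤ, v (i - 1) ≤ v i := by
  intro i
  have hL0 : 0 < τ / h := div_pos hτ hh
  have hL1 : τ / h ≤ 1 := (div_le_one hh).mpr hτh
  have key : ∀ j : ℤ, v j = u j + (τ / h) * (u (j + 1) - u j) := by
    intro j
    have h1 : u j ≤ u (j + 1) := by
      have := hmono (j + 1); simpa using this
    have h2 : u (j - 1) - u j ≤ u (j + 1) - u j := by
      have := hmono j; linarith
    rw [hv j, max_eq_left h2, max_eq_right (by linarith)]
  rw [key, key]
  have h1 : u (i - 1) ≤ u i := hmono i
  have h2 : u i ≤ u (i + 1) := by simpa using hmono (i + 1)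
  have h3 : (i - 1) + 1 = i := by ring
  rw [h3]
  nlinarith [mul_nonneg (le_of_lt hL0) (sub_nonneg.mpr h2),
    mul_nonneg (sub_nonneg.mpr hL1) (sub_nonneg.mpr h1)]
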